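/- arXiv:1712.02426 — 4 statements merged into one kernel-verified Lean document; each statement's English description precedes it below -/
import Mathlib

section
/- Let ã be a standard Gaussian random variable. Then for any τ ≥ 0, E[ã² | ã² ≤ τ] ≤ τ/3. -/
open MeasureTheory ProbabilityTheory Real

/-- Conditional expectation of `f` given the event `S`. -/
noncomputable def condExpOn (μ : Measure ℝ) (S : Set ℝ) (f : ℝ → ℝ) : ℝ :=
  (∫ x in S, f x ∂μ) / (μ S).toReal

section aux

/-- Primitive of `f` based at `0`. -/
noncomputable def myPrim (f : ℝ → ℝ) (t : ℝ) : ℝ := ∫ x in (0:ℝ)..t, f x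

lemma hasDerivAt_myPrim {f : ℝ → ℝ} (hf : Continuous f) (t : ℝ) :
    HasDerivAt (myPrim f) (f t) t :=
  intervalIntegral.integral_hasDerivAt_right (hf.intervalIntegrable 0 t)
    (hf.stronglyMeasurableAtFilter _ _) hf.continuousAt

lemma myPrim_sub {f : ℝ → ℝ} (hf : Continuous f) (a b : ℝ) :
    myPrim f b - myPrim f a = ∫ x in a..b, f x := by
  simpa [myPrim] using
    intervalIntegral.integral_interval_sub_left (hf.intervalIntegrable 0 b)
      (hf.intervalIntegrable 0 a)

noncomputable def myF1 : ℝ → ℝ := fun x => Real.exp (-x ^ 2 / 2)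
noncomputable def myF2 : ℝ → ℝ := fun x => x ^ 2 * Real.exp (-x ^ 2 / 2)

lemma myF1_cont : Continuous myF1 := by unfold myF1; fun_prop
lemma myF2_cont : Continuous myF2 := by unfold myF2; fun_prop

noncomputable def myG (t : ℝ) : ℝ :=
  t ^ 2 / 3 * (myPrim myF1 t - myPrim myF1 (-t)) - (myPrim myF2 t - myPrim myF2 (-t))

lemma myG_hasDerivAt (t : ℝ) :
    HasDerivAt myG
      (2 * t / 3 * (myPrim myF1 t - myPrim myF1 (-t))
        + t ^ 2 / 3 * (2 * myF1 t) - 2 * myF2 t) t := by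
  have h1 : HasDerivAt (fun u : ℝ => myPrim myF1 u - myPrim myF1 (-u))
      (myF1 t - myF1 (-t) * (-1)) t :=
    (hasDerivAt_myPrim myF1_cont t).sub
      ((hasDerivAt_myPrim myF1_cont (-t)).comp t (hasDerivAt_neg t))
  have h2 : HasDerivAt (fun u : ℝ => myPrim myF2 u - myPrim myF2 (-u))
      (myF2 t - myF2 (-t) * (-1)) t :=
    (hasDerivAt_myPrim myF2_cont t).sub
      ((hasDerivAt_myPrim myF2_cont (-t)).comp t (hasDerivAt_neg t))
  have h3 : HasDerivAt (fun u : ℝ => u ^ 2 / 3) (2 * t / 3) t := by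
    simpa [mul_comm] using (hasDerivAt_pow 2 t).div_const 3
  have h4 := (h3.mul h1).sub h2
  have e1 : myF1 (-t) = myF1 t := by simp [myF1]
  have e2 : myF2 (-t) = myF2 t := by simp [myF2]
  have e3 : 2 * t / 3 * (myPrim myF1 t - myPrim myF1 (-t)) + t ^ 2 / 3 * (2 * myF1 t) - 2 * myF2 t
      = 2 * t / 3 * (myPrim myF1 t - myPrim myF1 (-t)) + t ^ 2 / 3 * (myF1 t - myF1 (-t) * -1)
        - (myF2 t - myF2 (-t) * -1) := by
    rw [e1, e2]
    ring
  rw [e3]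
  exact h4

lemma myG_mono : MonotoneOn myG (Set.Ici (0:ℝ)) := by
  apply monotoneOn_of_deriv_nonneg (convex_Ici 0)
  · exact fun x _ => ((myG_hasDerivAt x).differentiableAt).continuousAt.continuousWithinAt
  · exact fun x _ => ((myG_hasDerivAt x).differentiableAt).differentiableWithinAt
  · intro t ht
    rw [interior_Ici] at ht
    have ht' : (0:ℝ) < t := ht
    rw [(myG_hasDerivAt t).deriv]
    have hJ : 2 * t * Real.exp (-t ^ 2 / 2) ≤ myPrim myF1 t - myPrim myF1 (-t) := by
      rw [myPrim_sub myF1_cont]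
      have : ∫ x in (-t)..t, Real.exp (-t ^ 2 / 2) ≤ ∫ x in (-t)..t, myF1 x := by
        apply intervalIntegral.integral_mono_on (by linarith)
          (intervalIntegrable_const) (myF1_cont.intervalIntegrable _ _)
        intro x hx
        have hx1 := hx.1
        have hx2 := hx.2
        have hxt : x ^ 2 ≤ t ^ 2 := by nlinarith
        simp only [myF1]
        apply Real.exp_le_exp.2
        linarith
      rwa [intervalIntegral.integral_const, smul_eq_mul, sub_neg_eq_add, ← two_mul] at this
    have he : (0:ℝ) < Real.exp (-t ^ 2 / 2) := Real.exp_pos _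
    simp only [myF1, myF2]
    nlinarith [hJ, he, ht'.le]

/-- Core inequality. -/
lemma core_ineq {s : ℝ} (hs : 0 ≤ s) :
    ∫ x in (-s)..s, x ^ 2 * Real.exp (-x ^ 2 / 2) ≤
      s ^ 2 / 3 * ∫ x in (-s)..s, Real.exp (-x ^ 2 / 2) := by
  have h0 : myG 0 = 0 := by simp [myG, myPrim]
  have := myG_mono (Set.self_mem_Ici) (Set.mem_Ici.2 hs) hs
  rw [h0] at this
  unfold myG at this
  rw [myPrim_sub myF1_cont, myPrim_sub myF2_cont] at this
  simp only [myF1, myF2] at this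
  linarith

end aux

/-- for a standard Gaussian `ã` and any `τ ≥ 0`, `E[ã² | ã² ≤ τ] ≤ τ/3`. -/
theorem stmt2 (τ : ℝ) (hτ : 0 ≤ τ) :
    condExpOn (gaussianReal 0 1) {a : ℝ | a ^ 2 ≤ τ} (fun a => a ^ 2) ≤ τ / 3 := by
  set s : ℝ := Real.sqrt τ with hs_def
  have hs : 0 ≤ s := Real.sqrt_nonneg τ
  have hs2 : s ^ 2 = τ := Real.sq_sqrt hτ
  have hset : {a : ℝ | a ^ 2 ≤ τ} = Set.Icc (-s) s := by
    ext a
    simp only [Set.mem_setOf_eq, Set.mem_Icc, ← hs2]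
    constructor
    · intro h
      constructor <;> nlinarith
    · intro ⟨h1, h2⟩
      nlinarith
  rw [hset]
  -- rewrite the gaussian measure as a density against Lebesgue
  have hγ : gaussianReal 0 1 =
      volume.withDensity (fun x => ((gaussianPDFReal 0 1 x).toNNReal : ENNReal)) := by
    rw [gaussianReal_of_var_ne_zero 0 one_ne_zero]
    rfl
  have hmeas : Measurable fun x => (gaussianPDFReal 0 1 x).toNNReal :=
    (measurable_gaussianPDFReal 0 1).real_toNNReal
  have hIcc : MeasurableSet (Set.Icc (-s) s) := measurableSet_Icc
  have hpdf : ∀ x : ℝ, gaussianPDFReal 0 1 x = (Real.sqrt (2 * π))⁻¹ * Real.exp (-x ^ 2 / 2) := by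
    intro x
    simp [gaussianPDFReal]
  have hc : (0:ℝ) < (Real.sqrt (2 * π))⁻¹ := by
    have : (0:ℝ) < Real.sqrt (2 * π) := Real.sqrt_pos.2 (by positivity)
    positivity
  set c : ℝ := (Real.sqrt (2 * π))⁻¹ with hc_def
  -- numerator
  have hnum : (∫ x in Set.Icc (-s) s, x ^ 2 ∂(gaussianReal 0 1)) =
      c * ∫ x in (-s)..s, x ^ 2 * Real.exp (-x ^ 2 / 2) := by
    rw [hγ, setIntegral_withDensity_eq_setIntegral_smul hmeas _ hIcc]
    rw [intervalIntegral.integral_of_le (by linarith), ← integral_Icc_eq_integral_Ioc,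
      ← integral_const_mul]
    apply setIntegral_congr_fun hIcc
    intro x _
    have h0 : 0 ≤ gaussianPDFReal 0 1 x := gaussianPDFReal_nonneg 0 1 x
    simp only [NNReal.smul_def]
    rw [Real.coe_toNNReal _ h0, hpdf x, smul_eq_mul]
    ring
  -- denominator
  have hden : ((gaussianReal 0 1) (Set.Icc (-s) s)).toReal =
      c * ∫ x in (-s)..s, Real.exp (-x ^ 2 / 2) := by
    have h1 : ((gaussianReal 0 1) (Set.Icc (-s) s)).toReal =
        ∫ x in Set.Icc (-s) s, (1:ℝ) ∂(gaussianReal 0 1) := by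
      rw [setIntegral_const, smul_eq_mul, mul_one]
      rfl
    rw [h1, hγ, setIntegral_withDensity_eq_setIntegral_smul hmeas _ hIcc]
    rw [intervalIntegral.integral_of_le (by linarith), ← integral_Icc_eq_integral_Ioc,
      ← integral_const_mul]
    apply setIntegral_congr_fun hIcc
    intro x _
    have h0 : 0 ≤ gaussianPDFReal 0 1 x := gaussianPDFReal_nonneg 0 1 x
    simp only [NNReal.smul_def]
    rw [Real.coe_toNNReal _ h0, hpdf x, smul_eq_mul, mul_one]
  rw [condExpOn, hnum, hden]
  set J := ∫ x in (-s)..s, Real.exp (-x ^ 2 / 2) with hJ_def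
  set K := ∫ x in (-s)..s, x ^ 2 * Real.exp (-x ^ 2 / 2) with hK_def
  have hK : K ≤ τ / 3 * J := by
    have := core_ineq hs
    rw [hs2] at this
    simpa [hJ_def, hK_def] using this
  have hJ0 : 0 ≤ J :=
    intervalIntegral.integral_nonneg (by linarith) (fun x _ => (Real.exp_pos _).le)
  rcases eq_or_lt_of_le hJ0 with h | h
  · rw [← h, mul_zero, div_zero]
    positivity
  · rw [div_le_iff₀ (by positivity)]
    calc c * K ≤ c * (τ / 3 * J) := by nlinarith
      _ = τ / 3 * (c * J) := by ring
end

section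
/- Let X and Δ be symmetric n×n real matrices and set Z := X + Δ. Let u₁ and v₁ be unit principal eigenvectors (eigenvectors for the largest eigenvalue) of X and Z respectively, and suppose λ₁(X) > λ₂(X). Then √(1 − ⟨u₁, v₁⟩²) ≤ 2‖Δ‖₂ / (λ₁(X) − λ₂(X)). -/
open Finset
open scoped RealInnerProductSpace


/-- Euclidean norm of a vector in `ℝⁿ`. -/
noncomputable def vnorm {n : ℕ} (v : Fin n → ℝ) : ℝ := Real.sqrt (∑ i, v i ^ 2)

/-- Spectral (ℓ₂ operator) norm of a square matrix. -/
noncomputable def specNorm {n : ℕ} (A : Matrix (Fin n) (Fin n) ℝ) : ℝ :=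
  sSup {x : ℝ | ∃ v : Fin n → ℝ, vnorm v = 1 ∧ x = vnorm (A.mulVec v)}


private lemma dot_symm {n : ℕ} {A : Matrix (Fin n) (Fin n) ℝ} (hA : A.IsSymm)
    (u v : Fin n → ℝ) : ∑ i, u i * A.mulVec v i = ∑ i, v i * A.mulVec u i := by
  simp only [Matrix.mulVec, dotProduct, Finset.mul_sum]
  rw [Finset.sum_comm]
  exact Finset.sum_congr rfl fun i _ => Finset.sum_congr rfl fun j _ => by
    rw [hA.apply i j]; ring

private lemma quad_le {n : ℕ} {A : Matrix (Fin n) (Fin n) ℝ} (hA : A.IsSymm) (m : ℝ)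
    (hm : ∀ (l : ℝ) (v : Fin n → ℝ), v ≠ 0 → A.mulVec v = l • v → l ≤ m)
    (v : Fin n → ℝ) : ∑ i, v i * A.mulVec v i ≤ m * ∑ i, v i ^ 2 := by
  have hH : A.IsHermitian := by
    rw [Matrix.IsHermitian, Matrix.conjTranspose_eq_transpose_of_trivial]; exact hA
  set b := hH.eigenvectorBasis with hb
  set μ := hH.eigenvalues with hμdef
  have hμ : ∀ i, μ i ≤ m := fun i =>
    hm (μ i) (b i) ((WithLp.ofLp_eq_zero (x := b i)).not.mpr (b.orthonormal.ne_zero i)) (hH.mulVec_eigenvectorBasis i)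
  have key : ∀ x y : EuclideanSpace ℝ (Fin n), ⟪x, y⟫ = ∑ i, x i * y i := fun x y => by
    simp [PiLp.inner_apply, RCLike.inner_apply]
    exact Finset.sum_congr rfl fun _ _ => mul_comm _ _
  have key' : ∀ x y : Fin n → ℝ, ⟪WithLp.toLp 2 x, WithLp.toLp 2 y⟫ = ∑ i, x i * y i :=
    fun x y => key _ _
  have h2 : ∀ i, ⟪b i, (WithLp.toLp 2 (A.mulVec v))⟫
      = μ i * ⟪b i, (WithLp.toLp 2 v)⟫ := fun i => by
    rw [key, key]
    calc ∑ j, b i j * A.mulVec v j = ∑ j, v j * A.mulVec (b i) j := dot_symm hA _ _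
      _ = ∑ j, v j * (μ i * b i j) := Finset.sum_congr rfl fun j _ => by
            rw [show A.mulVec (b i) j = μ i * b i j from congrFun (hH.mulVec_eigenvectorBasis i) j]
      _ = μ i * ∑ j, b i j * v j := by rw [Finset.mul_sum]; exact Finset.sum_congr rfl fun j _ => by ring
  have expand : ∑ i, v i * A.mulVec v i = ∑ i, μ i * ⟪b i, (WithLp.toLp 2 v)⟫ ^ 2 := by
    rw [← key' v (A.mulVec v), ← b.sum_inner_mul_inner (WithLp.toLp 2 v) (WithLp.toLp 2 (A.mulVec v))]
    refine Finset.sum_congr rfl fun i _ => ?_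
    rw [h2 i, @real_inner_comm (EuclideanSpace ℝ (Fin n)) _ _ (WithLp.toLp 2 v) (b i)]; ring
  have norm_eq : ∑ i, v i ^ 2 = ∑ i, ⟪b i, (WithLp.toLp 2 v)⟫ ^ 2 := by
    have h1 := b.sum_inner_mul_inner (WithLp.toLp 2 v) (WithLp.toLp 2 v)
    rw [key' v v] at h1
    rw [show ∑ i, v i ^ 2 = ∑ i, v i * v i from Finset.sum_congr rfl fun i _ => sq (v i), ← h1]
    exact Finset.sum_congr rfl fun i _ => by
      rw [@real_inner_comm (EuclideanSpace ℝ (Fin n)) _ _ (WithLp.toLp 2 v) (b i)]; ring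
  rw [expand, norm_eq, Finset.mul_sum]
  exact Finset.sum_le_sum fun i _ => mul_le_mul_of_nonneg_right (hμ i) (sq_nonneg _)

private lemma specNorm_bdd {n : ℕ} (A : Matrix (Fin n) (Fin n) ℝ) :
    BddAbove {x : ℝ | ∃ v : Fin n → ℝ, vnorm v = 1 ∧ x = vnorm (A.mulVec v)} := by
  refine ⟨Real.sqrt (∑ i, ∑ j, A i j ^ 2), fun x hx => ?_⟩
  obtain ⟨v, hv, rfl⟩ := hx
  have hv2 : ∑ j, v j ^ 2 = 1 := by
    have h0 : (0:ℝ) ≤ ∑ j, v j ^ 2 := Finset.sum_nonneg fun _ _ => sq_nonneg _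
    have := Real.sq_sqrt h0
    rw [vnorm] at hv
    nlinarith
  apply Real.sqrt_le_sqrt
  refine Finset.sum_le_sum fun i _ => ?_
  have := Finset.sum_mul_sq_le_sq_mul_sq Finset.univ (fun j => A i j) v
  simpa [Matrix.mulVec, dotProduct, hv2] using this

private lemma vnorm_mulVec_le {n : ℕ} (A : Matrix (Fin n) (Fin n) ℝ) {v : Fin n → ℝ}
    (hv : vnorm v = 1) : vnorm (A.mulVec v) ≤ specNorm A :=
  le_csSup (specNorm_bdd A) ⟨v, hv, rfl⟩

private lemma vnorm_nonneg {n : ℕ} (v : Fin n → ℝ) : 0 ≤ vnorm v := Real.sqrt_nonneg _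

/-- Davis–Kahan / Yu–Wang–Samworth: for symmetric `X`, `Δ` with `Z = X + Δ`,
unit principal eigenvectors `u₁` of `X` and `v₁` of `Z`, and `λ₁(X) > λ₂(X)`,
`√(1 − ⟨u₁,v₁⟩²) ≤ 2‖Δ‖₂ / (λ₁(X) − λ₂(X))`. -/
theorem stmt5 (n : ℕ) (X Δ : Matrix (Fin n) (Fin n) ℝ)
    (hX : X.IsSymm) (hΔ : Δ.IsSymm)
    (l1 l2 mz : ℝ) (hgap : l2 < l1)
    (u1 v1 : Fin n → ℝ) (hu1 : vnorm u1 = 1) (hv1 : vnorm v1 = 1)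
    (hXu : X.mulVec u1 = l1 • u1)
    (hl1max : ∀ (l : ℝ) (v : Fin n → ℝ), v ≠ 0 → X.mulVec v = l • v → l ≤ l1)
    (hl2 : ∀ (l : ℝ) (v : Fin n → ℝ), v ≠ 0 → (∑ i, v i * u1 i) = 0 →
        X.mulVec v = l • v → l ≤ l2)
    (hZv : (X + Δ).mulVec v1 = mz • v1)
    (hmz : ∀ (l : ℝ) (v : Fin n → ℝ), v ≠ 0 → (X + Δ).mulVec v = l • v → l ≤ mz) :
    Real.sqrt (1 - (∑ i, u1 i * v1 i) ^ 2) ≤ 2 * specNorm Δ / (l1 - l2) := by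
  set c : ℝ := ∑ i, u1 i * v1 i with hc
  set D : ℝ := specNorm Δ with hDdef
  have hD : 0 ≤ D := le_trans (vnorm_nonneg (Δ.mulVec u1)) (vnorm_mulVec_le Δ hu1)
  have hg : (0:ℝ) < l1 - l2 := by linarith
  have huu : ∑ i, u1 i ^ 2 = 1 := by
    have h0 : (0:ℝ) ≤ ∑ i, u1 i ^ 2 := Finset.sum_nonneg fun _ _ => sq_nonneg _
    have := Real.sq_sqrt h0; rw [vnorm] at hu1; nlinarith
  have hvv : ∑ i, v1 i ^ 2 = 1 := by
    have h0 : (0:ℝ) ≤ ∑ i, v1 i ^ 2 := Finset.sum_nonneg fun _ _ => sq_nonneg _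
    have := Real.sq_sqrt h0; rw [vnorm] at hv1; nlinarith
  set p : Fin n → ℝ := fun i => v1 i - c * u1 i with hp
  have hpu : ∑ i, p i * u1 i = 0 := by
    have : ∑ i, p i * u1 i = (∑ i, u1 i * v1 i) - c * ∑ i, u1 i ^ 2 := by
      rw [Finset.mul_sum, ← Finset.sum_sub_distrib]
      exact Finset.sum_congr rfl fun i _ => by simp [hp]; ring
    rw [this, huu]; ring
  have hup : ∑ i, u1 i * p i = 0 := by
    rw [← hpu]; exact Finset.sum_congr rfl fun i _ => mul_comm _ _
  have hpv : ∑ i, p i * v1 i = 1 - c ^ 2 := by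
    have : ∑ i, p i * v1 i = (∑ i, v1 i ^ 2) - c * ∑ i, u1 i * v1 i := by
      rw [Finset.mul_sum, ← Finset.sum_sub_distrib]
      exact Finset.sum_congr rfl fun i _ => by simp [hp]; ring
    rw [this, hvv, ← hc]; ring
  have hpp : ∑ i, p i ^ 2 = 1 - c ^ 2 := by
    have : ∑ i, p i ^ 2 = (∑ i, p i * v1 i) - c * ∑ i, p i * u1 i := by
      rw [Finset.mul_sum, ← Finset.sum_sub_distrib]
      exact Finset.sum_congr rfl fun i _ => by simp [hp]; ring
    rw [this, hpv, hpu]; ring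
  have hc2 : 0 ≤ 1 - c ^ 2 := hpp ▸ Finset.sum_nonneg fun _ _ => sq_nonneg _
  set s : ℝ := Real.sqrt (1 - c ^ 2) with hs
  have hs2 : s ^ 2 = 1 - c ^ 2 := Real.sq_sqrt hc2
  have hs0 : 0 ≤ s := Real.sqrt_nonneg _
  have hs1 : s ≤ 1 := by nlinarith [sq_nonneg (s - 1), sq_nonneg c]
  have hvp : vnorm p = s := by rw [vnorm, hpp]
  -- Z structure
  have hXv1 : X.mulVec v1 = mz • v1 - Δ.mulVec v1 := by
    rw [Matrix.add_mulVec] at hZv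
    funext i; have := congrFun hZv i
    simp only [Pi.add_apply, Pi.sub_apply, Pi.smul_apply, smul_eq_mul] at *
    linarith
  -- fact 6
  have hA : ∑ i, p i * X.mulVec v1 i = mz * (1 - c ^ 2) - ∑ i, p i * Δ.mulVec v1 i := by
    rw [hXv1]
    have : ∑ i, p i * (mz • v1 - Δ.mulVec v1) i
        = mz * ∑ i, p i * v1 i - ∑ i, p i * Δ.mulVec v1 i := by
      rw [Finset.mul_sum, ← Finset.sum_sub_distrib]
      exact Finset.sum_congr rfl fun i _ => by
        simp only [Pi.sub_apply, Pi.smul_apply, smul_eq_mul]; ring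
    rw [this, hpv]
  -- fact 7
  have hB : ∑ i, p i * X.mulVec v1 i = ∑ i, p i * X.mulVec p i := by
    have hv1p : v1 = p + c • u1 := by funext i; simp [hp, smul_eq_mul]
    have hXsplit : X.mulVec v1 = X.mulVec p + (c * l1) • u1 := by
      rw [hv1p, Matrix.mulVec_add, Matrix.mulVec_smul, hXu, smul_smul]
    rw [hXsplit]
    have : ∑ i, p i * (X.mulVec p + (c * l1) • u1) i
        = ∑ i, p i * X.mulVec p i + c * l1 * ∑ i, p i * u1 i := by
      rw [Finset.mul_sum, ← Finset.sum_add_distrib]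
      exact Finset.sum_congr rfl fun i _ => by
        simp only [Pi.add_apply, Pi.smul_apply, smul_eq_mul]; ring
    rw [this, hpu]; ring
  -- fact 8 : quadratic form bound on orthogonal complement
  set P : Matrix (Fin n) (Fin n) ℝ := Matrix.vecMulVec u1 u1 with hPdef
  have hPmul : ∀ w : Fin n → ℝ, P.mulVec w = (∑ j, u1 j * w j) • u1 := by
    intro w; funext i
    simp only [Matrix.mulVec, dotProduct, hPdef, Matrix.vecMulVec_apply,
      Pi.smul_apply, smul_eq_mul, Finset.sum_mul]
    exact Finset.sum_congr rfl fun j _ => by ring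
  set X' : Matrix (Fin n) (Fin n) ℝ := X - (l1 - l2) • P with hX'def
  have hX'symm : X'.IsSymm := by
    refine Matrix.IsSymm.sub hX (Matrix.IsSymm.smul ?_ _)
    exact Matrix.IsSymm.ext fun i j => by simp [hPdef, Matrix.vecMulVec_apply, mul_comm]
  have hX'mul : ∀ w : Fin n → ℝ, X'.mulVec w
      = X.mulVec w - ((l1 - l2) * ∑ j, u1 j * w j) • u1 := by
    intro w
    rw [hX'def, Matrix.sub_mulVec, Matrix.smul_mulVec, hPmul w, smul_smul]
  have hX'u : X'.mulVec u1 = l2 • u1 := by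
    rw [hX'mul u1, hXu]
    have : ∑ j, u1 j * u1 j = 1 := by
      rw [← huu]; exact Finset.sum_congr rfl fun i _ => (sq (u1 i)).symm
    rw [this]
    funext i; simp only [Pi.sub_apply, Pi.smul_apply, smul_eq_mul]; ring
  have hX'eig : ∀ (l : ℝ) (v : Fin n → ℝ), v ≠ 0 → X'.mulVec v = l • v → l ≤ l2 := by
    intro l v hv hev
    rcases eq_or_ne l l2 with h | h
    · exact le_of_eq h
    · have horth : ∑ i, v i * u1 i = 0 := by
        have h1 : ∑ i, u1 i * X'.mulVec v i = ∑ i, v i * X'.mulVec u1 i := dot_symm hX'symm u1 v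
        rw [hev, hX'u] at h1
        have h2 : ∑ i, u1 i * (l • v) i = l * ∑ i, v i * u1 i := by
          rw [Finset.mul_sum]; exact Finset.sum_congr rfl fun i _ => by
            simp only [Pi.smul_apply, smul_eq_mul]; ring
        have h3 : ∑ i, v i * (l2 • u1) i = l2 * ∑ i, v i * u1 i := by
          rw [Finset.mul_sum]; exact Finset.sum_congr rfl fun i _ => by
            simp only [Pi.smul_apply, smul_eq_mul]; ring
        rw [h2, h3] at h1
        have := sub_ne_zero.mpr h
        have : (l - l2) * ∑ i, v i * u1 i = 0 := by linarith
        exact (mul_eq_zero.mp this).resolve_left (sub_ne_zero.mpr h)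
      have hXveq : X.mulVec v = l • v := by
        have h4 : ∑ j, u1 j * v j = 0 := by
          rw [← horth]; exact Finset.sum_congr rfl fun i _ => mul_comm _ _
        rw [hX'mul v, h4, mul_zero, zero_smul, sub_zero] at hev
        exact hev
      exact hl2 l v hv horth hXveq
  have hC : ∑ i, p i * X.mulVec p i ≤ l2 * (1 - c ^ 2) := by
    have hq := quad_le hX'symm l2 hX'eig p
    rw [hX'mul p, hup, mul_zero, zero_smul, sub_zero, hpp] at hq
    exact hq
  -- fact 9 : mz ≥ l1 - D
  have hZsymm : (X + Δ).IsSymm := hX.add hΔ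
  have hδu : -D ≤ ∑ i, u1 i * Δ.mulVec u1 i := by
    have hcs := Real.sum_mul_le_sqrt_mul_sqrt Finset.univ (fun i => -u1 i) (Δ.mulVec u1)
    have h1 : ∑ i, (-u1 i) * Δ.mulVec u1 i = -(∑ i, u1 i * Δ.mulVec u1 i) := by
      rw [← Finset.sum_neg_distrib]; exact Finset.sum_congr rfl fun i _ => by ring
    have h2 : Real.sqrt (∑ i, (-u1 i) ^ 2) = 1 := by
      rw [show (∑ i, (-u1 i) ^ 2) = ∑ i, u1 i ^ 2 from
        Finset.sum_congr rfl fun i _ => by ring, huu, Real.sqrt_one]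
    have h3 : Real.sqrt (∑ i, Δ.mulVec u1 i ^ 2) ≤ D := vnorm_mulVec_le Δ hu1
    rw [h1, h2] at hcs
    nlinarith
  have hmzge : l1 - D ≤ mz := by
    have hq := quad_le hZsymm mz hmz u1
    rw [huu, mul_one] at hq
    have hsplit : ∑ i, u1 i * (X + Δ).mulVec u1 i
        = l1 + ∑ i, u1 i * Δ.mulVec u1 i := by
      have : (X + Δ).mulVec u1 = X.mulVec u1 + Δ.mulVec u1 := Matrix.add_mulVec _ _ _
      rw [this, hXu]
      have : ∑ i, u1 i * (l1 • u1 + Δ.mulVec u1) i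
          = l1 * (∑ i, u1 i ^ 2) + ∑ i, u1 i * Δ.mulVec u1 i := by
        rw [Finset.mul_sum, ← Finset.sum_add_distrib]
        exact Finset.sum_congr rfl fun i _ => by
          simp only [Pi.add_apply, Pi.smul_apply, smul_eq_mul]; ring
      rw [this, huu]; ring
    rw [hsplit] at hq
    linarith
  -- fact 10 : Cauchy-Schwarz on p and Δ v1
  have hCS : ∑ i, p i * Δ.mulVec v1 i ≤ s * D := by
    have hcs := Real.sum_mul_le_sqrt_mul_sqrt Finset.univ p (Δ.mulVec v1)
    have h3 : Real.sqrt (∑ i, Δ.mulVec v1 i ^ 2) ≤ D := vnorm_mulVec_le Δ hv1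
    have h4 : Real.sqrt (∑ i, p i ^ 2) = s := by rw [hpp]
    rw [h4] at hcs
    calc ∑ i, p i * Δ.mulVec v1 i ≤ s * Real.sqrt (∑ i, Δ.mulVec v1 i ^ 2) := hcs
      _ ≤ s * D := mul_le_mul_of_nonneg_left h3 hs0
  -- combine
  have hmain : (l1 - l2 - D) * s ^ 2 ≤ s * D := by
    have h5 : (mz - l2) * (1 - c ^ 2) ≤ ∑ i, p i * Δ.mulVec v1 i := by linarith [hA, hB, hC]
    have h6 : (l1 - l2 - D) * (1 - c ^ 2) ≤ (mz - l2) * (1 - c ^ 2) :=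
      mul_le_mul_of_nonneg_right (by linarith) hc2
    calc (l1 - l2 - D) * s ^ 2 = (l1 - l2 - D) * (1 - c ^ 2) := by rw [hs2]
      _ ≤ (mz - l2) * (1 - c ^ 2) := h6
      _ ≤ ∑ i, p i * Δ.mulVec v1 i := h5
      _ ≤ s * D := hCS
  -- finish
  clear_value s c D p P X'
  rw [le_div_iff₀ hg]
  rcases eq_or_lt_of_le hs0 with h | hspos
  · rw [← h, zero_mul]; linarith
  · have hss : s ^ 2 ≤ s := by nlinarith
    have h7 : D * s ^ 2 ≤ D * s := mul_le_mul_of_nonneg_left hss hD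
    have h6 : s * (s * (l1 - l2)) ≤ s * (2 * D) := by linarith [hmain, h7]
    exact le_of_mul_le_mul_left h6 hspos
end

section
/- Let a ∼ N(0, I_n), let x ∈ R^n, and for a fixed index set B_b ⊆ {1,…,n} of cardinality B, let x_b denote the restriction of x to B_b. Then E[ Σ_{j∈B_b} (aᵀx)⁴ a_j⁴ ] = 9B‖x‖₂⁴ + 24 Σ_{j∈B_b} x_j⁴ + 72‖x_b‖₂²‖x‖₂². -/
open MeasureTheory ProbabilityTheory Real Filter Set Asymptotics Topology
open scoped ENNReal NNReal

namespace Stmt6Aux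

lemma tendsto_pow_exp_atTop (k : ℕ) :
    Tendsto (fun x : ℝ => x ^ k * Real.exp (-(1/2) * x ^ 2)) atTop (𝓝 0) := by
  have h := rpow_mul_exp_neg_mul_sq_isLittleO_exp_neg (by norm_num : (0:ℝ) < 1/2) (k : ℝ)
  have h2 : (fun x : ℝ => x ^ k * Real.exp (-(1/2) * x ^ 2))
      =o[atTop] fun x : ℝ => Real.exp (-(1/2) * x) := by
    refine h.congr' ?_ (Eventually.of_forall fun x => rfl)
    filter_upwards [eventually_ge_atTop (0:ℝ)] with x hx
    rw [Real.rpow_natCast]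
  exact h2.tendsto_zero_of_tendsto
    (Real.tendsto_exp_atBot.comp (tendsto_id.const_mul_atTop_of_neg (by norm_num)))

lemma integrable_pow_exp (k : ℕ) :
    Integrable (fun x : ℝ => x ^ k * Real.exp (-(1/2) * x ^ 2)) := by
  set f := fun x : ℝ => x ^ k * Real.exp (-(1/2) * x ^ 2) with hf
  have hcont : Continuous f := by fun_prop
  have hIoi : IntegrableOn f (Ioi 0) := by
    refine integrable_of_isBigO_exp_neg (by norm_num : (0:ℝ) < 1/2)
      (hcont.continuousOn) ?_
    have h := rpow_mul_exp_neg_mul_sq_isLittleO_exp_neg (by norm_num : (0:ℝ) < 1/2) (k : ℝ)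
    refine (h.congr' ?_ (Eventually.of_forall fun x => rfl)).isBigO
    filter_upwards [eventually_ge_atTop (0:ℝ)] with x hx
    rw [Real.rpow_natCast]
  have hIic : IntegrableOn f (Iic 0) := by
    rw [← Measure.map_neg_eq_self (volume : Measure ℝ)]
    have m : MeasurableEmbedding fun x : ℝ => -x :=
      (Homeomorph.neg ℝ).measurableEmbedding
    rw [m.integrableOn_map_iff]
    have : (f ∘ fun x : ℝ => -x) = fun x : ℝ => ((-1 : ℝ) ^ k) * f x := by
      funext x
      simp only [Function.comp_apply, hf, neg_sq]
      ring
    rw [this]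
    have : ((fun x : ℝ => -x) ⁻¹' Iic 0) = Ici 0 := by
      ext y; simp [neg_le]
    rw [this]
    exact ((integrableOn_Ici_iff_integrableOn_Ioi (f := f)).mpr hIoi).const_mul _
  have : IntegrableOn f (Iic 0 ∪ Ioi 0) := hIic.union hIoi
  rwa [Iic_union_Ioi, integrableOn_univ] at this

noncomputable def G (k : ℕ) : ℝ := ∫ x : ℝ, x ^ k * Real.exp (-(1/2) * x ^ 2)

lemma G_zero : G 0 = Real.sqrt (2 * π) := by
  have h := integral_gaussian (1/2)
  have : G 0 = ∫ x : ℝ, Real.exp (-(1/2) * x ^ 2) := by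
    unfold G; simp
  rw [this, h]
  rw [show π / (1/2 : ℝ) = 2 * π by ring]

lemma G_odd {k : ℕ} (hk : Odd k) : G k = 0 := by
  have h := integral_neg_eq_self (fun x : ℝ => x ^ k * Real.exp (-(1/2) * x ^ 2))
    (volume : Measure ℝ)
  have h2 : (∫ x : ℝ, (-x) ^ k * Real.exp (-(1/2) * (-x) ^ 2)) = - G k := by
    unfold G
    rw [← integral_neg]
    congr 1; funext x
    rw [hk.neg_pow, neg_sq]; ring
  have h3 : (∫ x : ℝ, x ^ k * Real.exp (-(1/2) * x ^ 2)) = G k := rfl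
  have h4 := h2.symm.trans h
  linarith [h4, h3]

lemma G_rec (k : ℕ) : G (k + 2) = (k + 1 : ℝ) * G k := by
  set f : ℝ → ℝ := fun x => -(x ^ (k+1) * Real.exp (-(1/2) * x ^ 2)) with hfdef
  set f' : ℝ → ℝ := fun x =>
    x ^ (k+2) * Real.exp (-(1/2) * x ^ 2) - (k + 1 : ℝ) * (x ^ k * Real.exp (-(1/2) * x ^ 2))
    with hf'def
  have hderiv : ∀ x : ℝ, HasDerivAt f (f' x) x := by
    intro x
    have h1 : HasDerivAt (fun x : ℝ => x ^ (k+1)) ((k+1 : ℕ) * x ^ k) x := by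
      simpa using hasDerivAt_pow (k+1) x
    have h2 : HasDerivAt (fun x : ℝ => Real.exp (-(1/2) * x ^ 2))
        (Real.exp (-(1/2) * x ^ 2) * (-(1/2) * (2 * x))) x := by
      have hin : HasDerivAt (fun x : ℝ => -(1/2 : ℝ) * x ^ 2) (-(1/2) * (2 * x)) x := by
        simpa using (hasDerivAt_pow 2 x).const_mul (-(1/2 : ℝ))
      exact hin.exp
    have h3 : HasDerivAt f _ x := (h1.mul h2).neg
    convert h3 using 1
    simp only [hf'def]
    push_cast
    ring
  have hint : Integrable f' :=
    (integrable_pow_exp (k+2)).sub ((integrable_pow_exp k).const_mul _)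
  have htop : Tendsto f atTop (𝓝 0) := by
    have := (tendsto_pow_exp_atTop (k+1)).neg
    rwa [neg_zero] at this
  have hbot : Tendsto f atBot (𝓝 0) := by
    have h2 : Tendsto (fun x : ℝ => f (-x)) atTop (𝓝 0) := by
      have := (tendsto_pow_exp_atTop (k+1)).const_mul ((-1 : ℝ) ^ k)
      simp only [mul_zero] at this
      refine this.congr fun x => ?_
      simp only [hfdef, neg_sq]
      ring
    have := h2.comp tendsto_neg_atBot_atTop
    simpa [Function.comp_def] using this
  have h0 := integral_of_hasDerivAt_of_tendsto hderiv hint hbot htop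
  rw [sub_zero] at h0
  have hsplit : (∫ x : ℝ, f' x) =
      G (k+2) - (k+1 : ℝ) * G k := by
    unfold G
    rw [hf'def]
    rw [integral_sub (integrable_pow_exp (k+2)) ((integrable_pow_exp k).const_mul _),
      integral_const_mul]
  linarith [hsplit.symm.trans h0]

lemma G_two : G 2 = Real.sqrt (2 * π) := by rw [G_rec 0, G_zero]; norm_num
lemma G_four : G 4 = 3 * Real.sqrt (2 * π) := by rw [G_rec 2, G_two]; norm_num
lemma G_six : G 6 = 15 * Real.sqrt (2 * π) := by rw [G_rec 4, G_four]; norm_num; ring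
lemma G_eight : G 8 = 105 * Real.sqrt (2 * π) := by rw [G_rec 6, G_six]; norm_num; ring

lemma pdf_eq (x : ℝ) :
    gaussianPDFReal 0 1 x = (Real.sqrt (2 * π))⁻¹ * Real.exp (-(1/2) * x ^ 2) := by
  unfold gaussianPDFReal
  push_cast
  rw [mul_one]
  congr 1
  ring_nf

lemma integrable_pow_gauss (k : ℕ) :
    Integrable (fun t : ℝ => t ^ k) (gaussianReal 0 1) := by
  rw [gaussianReal_of_var_ne_zero 0 one_ne_zero]
  rw [integrable_withDensity_iff (measurable_gaussianPDF 0 1)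
    (Eventually.of_forall fun x => ENNReal.ofReal_lt_top)]
  have heq : (fun x : ℝ => x ^ k * (gaussianPDF 0 1 x).toReal)
      = fun x : ℝ => (Real.sqrt (2 * π))⁻¹ * (x ^ k * Real.exp (-(1/2) * x ^ 2)) := by
    funext x
    rw [gaussianPDF_def]
    simp only
    rw [ENNReal.toReal_ofReal (gaussianPDFReal_nonneg 0 1 x), pdf_eq]
    ring
  rw [heq]
  exact (integrable_pow_exp k).const_mul _

noncomputable def M (k : ℕ) : ℝ := ∫ x : ℝ, x ^ k ∂(gaussianReal 0 1)

lemma M_eq (k : ℕ) : M k = (Real.sqrt (2 * π))⁻¹ * G k := by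
  unfold M
  rw [gaussianReal_of_var_ne_zero 0 one_ne_zero]
  have : Measure.withDensity ℙ (gaussianPDF 0 1)
      = Measure.withDensity ℙ (fun x => ((gaussianPDFReal 0 1 x).toNNReal : ℝ≥0∞)) := by
    congr 1
  rw [this, integral_withDensity_eq_integral_smul
    ((measurable_gaussianPDFReal 0 1).real_toNNReal)]
  unfold G
  rw [← integral_const_mul]
  congr 1
  funext x
  rw [NNReal.smul_def, smul_eq_mul, Real.coe_toNNReal _ (gaussianPDFReal_nonneg 0 1 x), pdf_eq]
  ring

lemma sqrt_two_pi_pos : (0:ℝ) < Real.sqrt (2 * π) :=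
  Real.sqrt_pos.mpr (by positivity)

lemma M_zero : M 0 = 1 := by
  rw [M_eq, G_zero]; field_simp
lemma M_one : M 1 = 0 := by rw [M_eq, G_odd (by norm_num : Odd 1)]; ring
lemma M_two : M 2 = 1 := by rw [M_eq, G_two]; field_simp
lemma M_three : M 3 = 0 := by rw [M_eq, G_odd ⟨1, by norm_num⟩]; ring
lemma M_four : M 4 = 3 := by
  rw [M_eq, G_four]
  rw [mul_comm (3:ℝ), ← mul_assoc, inv_mul_cancel₀ sqrt_two_pi_pos.ne']
  ring
lemma M_five : M 5 = 0 := by rw [M_eq, G_odd ⟨2, by norm_num⟩]; ring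
lemma M_six : M 6 = 15 := by
  rw [M_eq, G_six, mul_comm (15:ℝ), ← mul_assoc, inv_mul_cancel₀ sqrt_two_pi_pos.ne']
  ring
lemma M_seven : M 7 = 0 := by rw [M_eq, G_odd ⟨3, by norm_num⟩]; ring
lemma M_eight : M 8 = 105 := by
  rw [M_eq, G_eight, mul_comm (105:ℝ), ← mul_assoc, inv_mul_cancel₀ sqrt_two_pi_pos.ne']
  ring

section Pi

variable {n : ℕ}

noncomputable def πn (n : ℕ) : Measure (Fin n → ℝ) :=
  Measure.pi fun _ : Fin n => gaussianReal 0 1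

lemma integral_monomial (c : Fin n → ℕ) :
    ∫ a : Fin n → ℝ, ∏ i, a i ^ c i ∂(πn n) = ∏ i, M (c i) := by
  letI : MeasureSpace ℝ := ⟨gaussianReal 0 1⟩
  haveI : SigmaFinite (volume : Measure ℝ) :=
    inferInstanceAs (SigmaFinite (gaussianReal 0 1))
  exact MeasureTheory.integral_fintype_prod_eq_prod (fun i t => t ^ c i)

lemma integrable_monomial (c : Fin n → ℕ) :
    Integrable (fun a : Fin n → ℝ => ∏ i, a i ^ c i) (πn n) := by
  letI : MeasureSpace ℝ := ⟨gaussianReal 0 1⟩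
  haveI : SigmaFinite (volume : Measure ℝ) :=
    inferInstanceAs (SigmaFinite (gaussianReal 0 1))
  exact Integrable.fintype_prod (f := fun i t => t ^ c i) (fun i => integrable_pow_gauss (c i))

end Pi

instance (n : ℕ) : IsProbabilityMeasure (πn n) := by
  unfold πn; infer_instance

noncomputable def Em : ℕ → ℝ → ℝ
  | 0, _ => 1
  | 1, _ => 0
  | 2, v => v
  | 3, _ => 0
  | 4, v => 3 * v ^ 2
  | _+5, _ => 0

lemma key (n : ℕ) (x : Fin n → ℝ) (s : Finset (Fin n)) :
    ∀ c : Fin n → ℕ, (∀ i ∈ s, c i = 0) →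
      (∀ m, m ≤ 4 → Integrable
          (fun a : Fin n → ℝ => (∏ i, a i ^ c i) * (∑ i ∈ s, a i * x i) ^ m) (πn n)) ∧
      (∀ m, m ≤ 4 → (∫ a : Fin n → ℝ,
          (∏ i, a i ^ c i) * (∑ i ∈ s, a i * x i) ^ m ∂(πn n))
          = (∏ i, M (c i)) * Em m (∑ i ∈ s, x i ^ 2)) := by
  induction s using Finset.induction_on with
  | empty =>
    intro c hc
    constructor
    · intro m hm
      rcases Nat.eq_zero_or_pos m with rfl | hm0
      · simpa using integrable_monomial c
      · have h : (fun a : Fin n → ℝ =>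
            (∏ i, a i ^ c i) * (∑ i ∈ (∅ : Finset (Fin n)), a i * x i) ^ m)
            = fun _ => 0 := by
          funext a; simp [zero_pow hm0.ne']
        rw [h]; exact integrable_zero _ _ _
    · intro m hm
      interval_cases m <;>
        simp [Em, integral_monomial c, zero_pow]
  | @insert i₀ s hi₀ ih =>
    intro c hc
    have hc0 : c i₀ = 0 := hc i₀ (Finset.mem_insert_self _ _)
    have hcs : ∀ i ∈ s, c i = 0 := fun i hi => hc i (Finset.mem_insert_of_mem hi)
    have hds : ∀ k : ℕ, ∀ i ∈ s, Function.update c i₀ k i = 0 := by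
      intro k i hi
      rw [Function.update_apply, if_neg (by rintro rfl; exact hi₀ hi)]
      exact hcs i hi
    have hsplit : ∀ (f : Fin n → ℕ → ℝ) (e : Fin n → ℕ),
        (∏ i, f i (e i)) = f i₀ (e i₀) * ∏ i ∈ Finset.univ.erase i₀, f i (e i) :=
      fun f e =>
        (Finset.mul_prod_erase Finset.univ (fun i => f i (e i)) (Finset.mem_univ i₀)).symm
    have hW : ∀ (k : ℕ) (a : Fin n → ℝ),
        (∏ i, a i ^ c i) * a i₀ ^ k = ∏ i, a i ^ Function.update c i₀ k i := by
      intro k a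
      rw [hsplit (fun i e => a i ^ e) c, hsplit (fun i e => a i ^ e) (Function.update c i₀ k)]
      have h2 : (∏ i ∈ Finset.univ.erase i₀, a i ^ Function.update c i₀ k i)
          = ∏ i ∈ Finset.univ.erase i₀, a i ^ c i :=
        Finset.prod_congr rfl fun i hi => by
          rw [Function.update_apply, if_neg (Finset.ne_of_mem_erase hi)]
      rw [Function.update_self, h2, hc0, pow_zero, one_mul]
      ring
    have hMd : ∀ k : ℕ, (∏ i, M (Function.update c i₀ k i)) = M k * ∏ i, M (c i) := by
      intro k
      rw [hsplit (fun _ e => M e) (Function.update c i₀ k), hsplit (fun _ e => M e) c]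
      have h2 : (∏ i ∈ Finset.univ.erase i₀, M (Function.update c i₀ k i))
          = ∏ i ∈ Finset.univ.erase i₀, M (c i) :=
        Finset.prod_congr rfl fun i hi => by
          rw [Function.update_apply, if_neg (Finset.ne_of_mem_erase hi)]
      rw [Function.update_self, h2, hc0, M_zero, one_mul]
    have hsum : ∀ a : Fin n → ℝ,
        ∑ i ∈ insert i₀ s, a i * x i = a i₀ * x i₀ + ∑ i ∈ s, a i * x i :=
      fun a => Finset.sum_insert hi₀
    have hfun : ∀ m : ℕ,
        (fun a : Fin n → ℝ => (∏ i, a i ^ c i) * (∑ i ∈ insert i₀ s, a i * x i) ^ m)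
        = fun a => ∑ k ∈ Finset.range (m+1),
            ((m.choose k : ℝ) * x i₀ ^ k) *
              ((∏ i, a i ^ Function.update c i₀ k i) * (∑ i ∈ s, a i * x i) ^ (m - k)) := by
      intro m
      funext a
      rw [hsum a, add_pow, Finset.mul_sum]
      refine Finset.sum_congr rfl fun k hk => ?_
      rw [← hW k a]
      ring
    constructor
    · intro m hm
      rw [hfun m]
      refine integrable_finset_sum _ fun k hk => ?_
      exact ((ih (Function.update c i₀ k) (hds k)).1 (m - k)
        (le_trans (Nat.sub_le _ _) hm)).const_mul _
    · intro m hm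
      rw [hfun m]
      rw [integral_finset_sum _ (fun k hk =>
        ((ih (Function.update c i₀ k) (hds k)).1 (m - k)
          (le_trans (Nat.sub_le _ _) hm)).const_mul _)]
      have hval : ∀ k ∈ Finset.range (m+1),
          (∫ a : Fin n → ℝ, ((m.choose k : ℝ) * x i₀ ^ k) *
            ((∏ i, a i ^ Function.update c i₀ k i) * (∑ i ∈ s, a i * x i) ^ (m - k)) ∂(πn n))
          = ((m.choose k : ℝ) * x i₀ ^ k) *
              ((M k * ∏ i, M (c i)) * Em (m - k) (∑ i ∈ s, x i ^ 2)) := by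
        intro k hk
        rw [integral_const_mul, (ih (Function.update c i₀ k) (hds k)).2 (m - k)
          (le_trans (Nat.sub_le _ _) hm), hMd k]
      rw [Finset.sum_congr rfl hval]
      have hs2 : ∑ i ∈ insert i₀ s, x i ^ 2 = x i₀ ^ 2 + ∑ i ∈ s, x i ^ 2 :=
        Finset.sum_insert hi₀
      rw [hs2]
      interval_cases m <;>
        simp only [Finset.sum_range_succ, Finset.sum_range_zero] <;>
        norm_num [Em, M_zero, M_one, M_two, M_three, M_four,
          show Nat.choose 4 2 = 6 from rfl] <;>
        ring

lemma perj (n : ℕ) (x : Fin n → ℝ) (j : Fin n) :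
    Integrable (fun a : Fin n → ℝ => (∑ i, a i * x i) ^ 4 * a j ^ 4) (πn n) ∧
    (∫ a : Fin n → ℝ, (∑ i, a i * x i) ^ 4 * a j ^ 4 ∂(πn n))
      = 9 * (∑ i, x i ^ 2) ^ 2 + 72 * x j ^ 2 * (∑ i, x i ^ 2) + 24 * x j ^ 4 := by
  classical
  set s : Finset (Fin n) := Finset.univ.erase j with hs
  have hds : ∀ k : ℕ, ∀ i ∈ s, Function.update (fun _ : Fin n => 0) j (4+k) i = 0 := by
    intro k i hi
    rw [Function.update_apply, if_neg (Finset.ne_of_mem_erase hi)]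
  have hWd : ∀ (k : ℕ) (a : Fin n → ℝ),
      (∏ i, a i ^ Function.update (fun _ : Fin n => 0) j (4+k) i) = a j ^ (4+k) := by
    intro k a
    refine Finset.prod_eq_single_of_mem j (Finset.mem_univ j) (fun i _ hij => ?_) |>.trans ?_
    · rw [Function.update_apply, if_neg hij, pow_zero]
    · rw [Function.update_self]
  have hMd : ∀ k : ℕ,
      (∏ i, M (Function.update (fun _ : Fin n => 0) j (4+k) i)) = M (4+k) := by
    intro k
    refine Finset.prod_eq_single_of_mem j (Finset.mem_univ j) (fun i _ hij => ?_) |>.trans ?_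
    · rw [Function.update_apply, if_neg hij]; exact M_zero
    · rw [Function.update_self]
  have hsum : ∀ a : Fin n → ℝ,
      ∑ i, a i * x i = a j * x j + ∑ i ∈ s, a i * x i :=
    fun a => (Finset.add_sum_erase _ _ (Finset.mem_univ j)).symm
  have hfun : (fun a : Fin n → ℝ => (∑ i, a i * x i) ^ 4 * a j ^ 4)
      = fun a => ∑ k ∈ Finset.range 5,
          ((Nat.choose 4 k : ℝ) * x j ^ k) *
            ((∏ i, a i ^ Function.update (fun _ : Fin n => 0) j (4+k) i) *
              (∑ i ∈ s, a i * x i) ^ (4 - k)) := by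
    funext a
    rw [hsum a, add_pow, Finset.sum_mul]
    refine Finset.sum_congr rfl fun k hk => ?_
    rw [hWd k a]
    ring
  have key' := key n x s
  constructor
  · rw [hfun]
    refine integrable_finset_sum _ fun k hk => ?_
    have hk4 : k ≤ 4 := by
      have := Finset.mem_range.mp hk; omega
    exact ((key' _ (hds k)).1 (4 - k) (by omega)).const_mul _
  · rw [hfun]
    rw [integral_finset_sum _ (fun k hk =>
      ((key' _ (hds k)).1 (4 - k) (by omega)).const_mul _)]
    rw [Finset.sum_congr rfl (fun k hk => by
      rw [integral_const_mul, (key' _ (hds k)).2 (4 - k) (by omega), hMd k])]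
    have hσ : ∑ i ∈ s, x i ^ 2 = (∑ i, x i ^ 2) - x j ^ 2 := by
      have h := Finset.add_sum_erase Finset.univ (fun i => x i ^ 2) (Finset.mem_univ j)
      rw [← hs] at h
      linarith
    simp only [Finset.sum_range_succ, Finset.sum_range_zero]
    norm_num [Em, M_four, M_five, M_six, M_seven, M_eight,
      show Nat.choose 4 2 = 6 from rfl]
    rw [hσ]
    ring

end Stmt6Aux

open Stmt6Aux in
/-- Gaussian moment identity
`E[Σ_{j∈B_b} (aᵀx)⁴ a_j⁴] = 9B‖x‖₂⁴ + 24 Σ_{j∈B_b} x_j⁴ + 72‖x_b‖₂²‖x‖₂²`. -/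
theorem stmt6 (n : ℕ) (x : Fin n → ℝ) (Bb : Finset (Fin n)) :
    (∫ a : Fin n → ℝ, ∑ j ∈ Bb, (∑ i, a i * x i) ^ 4 * a j ^ 4
        ∂(Measure.pi fun _ : Fin n => gaussianReal 0 1)) =
      9 * (Bb.card : ℝ) * (∑ i, x i ^ 2) ^ 2 + 24 * ∑ j ∈ Bb, x j ^ 4 +
        72 * (∑ j ∈ Bb, x j ^ 2) * (∑ i, x i ^ 2) := by
  show (∫ a : Fin n → ℝ, ∑ j ∈ Bb, (∑ i, a i * x i) ^ 4 * a j ^ 4 ∂(πn n)) = _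
  rw [integral_finset_sum Bb (fun j _ => (perj n x j).1)]
  rw [Finset.sum_congr rfl (fun j _ => (perj n x j).2)]
  rw [Finset.sum_add_distrib, Finset.sum_add_distrib, Finset.sum_const,
    ← Finset.sum_mul, ← Finset.mul_sum, nsmul_eq_mul]
  rw [← Finset.mul_sum]
  ring
end

section
/- Let v ∈ R^n, let k ≥ 1, and let H_k(v) denote a best k-sparse approximation of v (keeping the k largest-magnitude entries and zeroing the rest). Then for every k-sparse vector x ∈ R^n (i.e., ‖x‖₀ ≤ k), ‖x − H_k(v)‖₂ ≤ 2·‖x_Ω − v_Ω‖₂ ≤ 2‖x − v‖₂, where Ω is the union of the supports of x and H_k(v). In particular ‖x − H_k(v)‖₂ ≤ ‖x_Ω − v_Ω‖₂ + ‖H_k(v) − v_Ω‖₂ and ‖H_k(v) − v_Ω‖₂ ≤ ‖x_Ω − v_Ω‖₂. -/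
open Classical

/-- Number of nonzero entries of a vector (the `ℓ₀` pseudo-norm). -/
noncomputable def sparsity {n : ℕ} (v : Fin n → ℝ) : ℕ :=
  (Finset.univ.filter fun i => v i ≠ 0).card

/-- Restriction of `v` to an index set, zeroing entries outside it. -/
noncomputable def restr {n : ℕ} (v : Fin n → ℝ) (S : Set (Fin n)) : Fin n → ℝ :=
  fun i => if i ∈ S then v i else 0

lemma vnorm_mono {n : ℕ} {a b : Fin n → ℝ} (h : ∑ i, a i ^ 2 ≤ ∑ i, b i ^ 2) :
    vnorm a ≤ vnorm b := Real.sqrt_le_sqrt h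

lemma vnorm_eq_norm {n : ℕ} (v : Fin n → ℝ) :
    vnorm v = ‖(WithLp.equiv 2 (Fin n → ℝ)).symm v‖ := by
  rw [EuclideanSpace.norm_eq]
  unfold vnorm
  congr 1
  refine Finset.sum_congr rfl fun i _ => ?_
  simp [Real.norm_eq_abs, sq_abs]

lemma vnorm_sub_le {n : ℕ} (a b : Fin n → ℝ) : vnorm (a - b) ≤ vnorm a + vnorm b := by
  rw [vnorm_eq_norm, vnorm_eq_norm, vnorm_eq_norm]
  have h : (WithLp.equiv 2 (Fin n → ℝ)).symm (a - b)
      = (WithLp.equiv 2 (Fin n → ℝ)).symm a - (WithLp.equiv 2 (Fin n → ℝ)).symm b := rfl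
  rw [h]
  exact norm_sub_le _ _

/-- if `Hv` is a best `k`-sparse approximation of `v` and `x` is any
`k`-sparse vector, then with `Ω` the union of the supports of `x` and `Hv`,
`‖x − Hv‖ ≤ 2‖x_Ω − v_Ω‖ ≤ 2‖x − v‖`; moreover
`‖x − Hv‖ ≤ ‖x_Ω − v_Ω‖ + ‖Hv − v_Ω‖` and `‖Hv − v_Ω‖ ≤ ‖x_Ω − v_Ω‖`. -/
theorem stmt16 (n k : ℕ) (hk : 1 ≤ k) (v Hv x : Fin n → ℝ)
    (hHs : sparsity Hv ≤ k)
    (hHopt : ∀ u : Fin n → ℝ, sparsity u ≤ k → vnorm (v - Hv) ≤ vnorm (v - u))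
    (hxs : sparsity x ≤ k) :
    vnorm (x - Hv) ≤ 2 * vnorm (restr x {i | x i ≠ 0 ∨ Hv i ≠ 0} -
        restr v {i | x i ≠ 0 ∨ Hv i ≠ 0}) ∧
    2 * vnorm (restr x {i | x i ≠ 0 ∨ Hv i ≠ 0} - restr v {i | x i ≠ 0 ∨ Hv i ≠ 0}) ≤
        2 * vnorm (x - v) ∧
    vnorm (x - Hv) ≤ vnorm (restr x {i | x i ≠ 0 ∨ Hv i ≠ 0} -
        restr v {i | x i ≠ 0 ∨ Hv i ≠ 0}) +
      vnorm (Hv - restr v {i | x i ≠ 0 ∨ Hv i ≠ 0}) ∧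
    vnorm (Hv - restr v {i | x i ≠ 0 ∨ Hv i ≠ 0}) ≤
      vnorm (restr x {i | x i ≠ 0 ∨ Hv i ≠ 0} - restr v {i | x i ≠ 0 ∨ Hv i ≠ 0}) := by
  set Ω : Set (Fin n) := {i | x i ≠ 0 ∨ Hv i ≠ 0} with hΩ
  -- x restricted to Ω is x itself
  have hxr : restr x Ω = x := by
    funext i
    by_cases h : i ∈ Ω
    · simp [restr, h]
    · have hx0 : x i = 0 := by
        by_contra hc
        exact h (Or.inl hc)
      simp [restr, h, hx0]
  -- pointwise identities
  have hA : ∀ i, (v i - Hv i) ^ 2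
      = (Hv i - restr v Ω i) ^ 2 + (if i ∈ Ω then 0 else v i ^ 2) := by
    intro i
    by_cases h : i ∈ Ω
    · simp only [restr, if_pos h, h, if_true]
      ring
    · have hH0 : Hv i = 0 := by
        by_contra hc
        exact h (Or.inr hc)
      simp [restr, h, hH0]
  have hB : ∀ i, (v i - x i) ^ 2
      = (restr x Ω i - restr v Ω i) ^ 2 + (if i ∈ Ω then 0 else v i ^ 2) := by
    intro i
    by_cases h : i ∈ Ω
    · simp only [restr, if_pos h, h, if_true]
      ring
    · have hx0 : x i = 0 := by
        by_contra hc
        exact h (Or.inl hc)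
      simp [restr, h, hx0]
  -- optimality squared
  have hopt : vnorm (v - Hv) ≤ vnorm (v - x) := hHopt x hxs
  have hsqA : (0:ℝ) ≤ ∑ i, (v - Hv) i ^ 2 :=
    Finset.sum_nonneg fun i _ => sq_nonneg _
  have hsq : ∑ i, (v - Hv) i ^ 2 ≤ ∑ i, (v - x) i ^ 2 := by
    have h1 : ∑ i, (v - Hv) i ^ 2 = vnorm (v - Hv) ^ 2 := by
      rw [vnorm, Real.sq_sqrt hsqA]
    have h2 : vnorm (v - x) ^ 2 = ∑ i, (v - x) i ^ 2 := by
      rw [vnorm, Real.sq_sqrt (Finset.sum_nonneg fun i _ => sq_nonneg _)]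
    rw [h1, ← h2]
    exact pow_le_pow_left₀ (Real.sqrt_nonneg _) hopt 2
  -- key inequality (d)
  have hd : vnorm (Hv - restr v Ω) ≤ vnorm (restr x Ω - restr v Ω) := by
    apply vnorm_mono
    have eA : ∑ i, (v - Hv) i ^ 2
        = ∑ i, (Hv - restr v Ω) i ^ 2 + ∑ i, (if i ∈ Ω then (0:ℝ) else v i ^ 2) := by
      rw [← Finset.sum_add_distrib]
      exact Finset.sum_congr rfl fun i _ => by simpa using hA i
    have eB : ∑ i, (v - x) i ^ 2
        = ∑ i, (restr x Ω - restr v Ω) i ^ 2 + ∑ i, (if i ∈ Ω then (0:ℝ) else v i ^ 2) := by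
      rw [← Finset.sum_add_distrib]
      exact Finset.sum_congr rfl fun i _ => by simpa using hB i
    rw [eA, eB] at hsq
    linarith
  -- triangle inequality (c)
  have hc : vnorm (x - Hv) ≤ vnorm (restr x Ω - restr v Ω) + vnorm (Hv - restr v Ω) := by
    have he : x - Hv = (restr x Ω - restr v Ω) - (Hv - restr v Ω) := by
      rw [hxr]; abel
    rw [he]
    exact vnorm_sub_le _ _
  -- restriction shrinks norm (b)
  have hb : vnorm (restr x Ω - restr v Ω) ≤ vnorm (x - v) := by
    apply vnorm_mono
    refine Finset.sum_le_sum fun i _ => ?_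
    by_cases h : i ∈ Ω
    · simp [restr, h]
    · simp only [restr, if_neg h, Pi.sub_apply]
      simpa using sq_nonneg ((x - v) i)
  refine ⟨by linarith, by linarith, hc, hd⟩
end
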